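/- The commuting graph of the dihedral group D_{2·2m} (m ≥ 2) has exactly m(2m - 1) + 5m edges. -/

import Mathlib

/-- The power graph of a group: distinct `x`, `y` are adjacent iff one is a power of the other. -/
def powerGraph (G : Type*) [Group G] : SimpleGraph G where
  Adj x y := x ≠ y ∧ ((∃ k : ℤ, x = y ^ k) ∨ (∃ k : ℤ, y = x ^ k))
  symm := by
    refine ⟨?_⟩; rintro x y ⟨hne, h | h⟩
    · exact ⟨hne.symm, Or.inr h⟩
    · exact ⟨hne.symm, Or.inl h⟩
  loopless := by refine ⟨?_⟩; rintro x ⟨hne, -⟩; exact hne rfl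

/-- The commuting graph of a group: distinct `x`, `y` are adjacent iff they commute. -/
def commutingGraph (G : Type*) [Group G] : SimpleGraph G where
  Adj x y := x ≠ y ∧ x * y = y * x
  symm := by refine ⟨?_⟩; rintro x y ⟨hne, h⟩; exact ⟨hne.symm, h.symm⟩
  loopless := by refine ⟨?_⟩; rintro x ⟨hne, -⟩; exact hne rfl

/-- The enhanced power graph of a group: distinct `x`, `y` are adjacent iff `⟨x, y⟩` is cyclic. -/
def enhancedPowerGraph (G : Type*) [Group G] : SimpleGraph G where
  Adj x y := x ≠ y ∧ IsCyclic ↥(Subgroup.closure {x, y})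
  symm := by refine ⟨?_⟩; rintro x y ⟨hne, h⟩; rw [Set.pair_comm] at h; exact ⟨hne.symm, h⟩
  loopless := by refine ⟨?_⟩; rintro x ⟨hne, -⟩; exact hne rfl

open DihedralGroup Finset in
private lemma dg_two_torsion_iff (m : ℕ) (hm : m ≠ 0) (x : ZMod (2 * m)) :
    x + x = 0 ↔ x = 0 ∨ x = (m : ZMod (2 * m)) := by
  haveI : NeZero (2 * m) := ⟨by omega⟩
  constructor
  · intro h
    have hx : ((x.val + x.val : ℕ) : ZMod (2 * m)) = 0 := by
      push_cast
      rw [ZMod.natCast_zmod_val]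
      exact h
    rw [ZMod.natCast_eq_zero_iff] at hx
    have hlt := ZMod.val_lt x
    obtain ⟨k, hk⟩ := hx
    have hk' : x.val = m * k := by
      have : 2 * x.val = 2 * (m * k) := by linarith
      omega
    have hk2 : k < 2 := by nlinarith
    have : x.val = 0 ∨ x.val = m := by interval_cases k <;> omega
    rcases this with h0 | h0
    · left
      rw [← ZMod.natCast_zmod_val x, h0, Nat.cast_zero]
    · right
      rw [← ZMod.natCast_zmod_val x, h0]
  · rintro (rfl | rfl)
    · simp
    · rw [← Nat.cast_add, show m + m = 2 * m by ring, ZMod.natCast_self]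

open DihedralGroup Finset in
private lemma dg_coe_m_ne_zero (m : ℕ) (hm : m ≠ 0) : (m : ZMod (2 * m)) ≠ 0 := by
  haveI : NeZero (2 * m) := ⟨by omega⟩
  intro h
  rw [ZMod.natCast_eq_zero_iff] at h
  have := Nat.le_of_dvd (by omega) h
  omega

open DihedralGroup Finset in
private lemma dg_card_two_torsion (m : ℕ) (hm : m ≠ 0) :
    Nat.card {x : ZMod (2 * m) // x + x = 0} = 2 := by
  haveI : NeZero (2 * m) := ⟨by omega⟩
  rw [Nat.card_eq_fintype_card, Fintype.card_subtype]
  have heq : (univ.filter fun x : ZMod (2 * m) => x + x = 0)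
      = {0, (m : ZMod (2 * m))} := by
    ext x
    simp [dg_two_torsion_iff m hm]
  rw [heq, card_insert_of_notMem (by simp [Ne, eq_comm, dg_coe_m_ne_zero m hm]),
    card_singleton]

open DihedralGroup in
private def dgEvenCommuteEquiv (m : ℕ) :
    { p : DihedralGroup (2*m) × DihedralGroup (2*m) // Commute p.1 p.2 } ≃
    (ZMod (2*m) × ZMod (2*m)) ⊕ ({x : ZMod (2*m) // x + x = 0} × ZMod (2*m))
      ⊕ ({x : ZMod (2*m) // x + x = 0} × ZMod (2*m))
      ⊕ ({x : ZMod (2*m) // x + x = 0} × ZMod (2*m)) where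
  toFun := fun
    | ⟨⟨r i, r j⟩, _⟩ => Sum.inl (i, j)
    | ⟨⟨r i, sr j⟩, h⟩ => Sum.inr (Sum.inl (⟨i, by
        have h2 := sr.inj h.eq; linear_combination -h2⟩, j))
    | ⟨⟨sr i, r j⟩, h⟩ => Sum.inr (Sum.inr (Sum.inl (⟨j, by
        have h2 := sr.inj h.eq; linear_combination h2⟩, i)))
    | ⟨⟨sr i, sr j⟩, h⟩ => Sum.inr (Sum.inr (Sum.inr (⟨i - j, by
        have h2 := r.inj h.eq; linear_combination -h2⟩, j)))
  invFun := fun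
    | Sum.inl (i, j) => ⟨⟨r i, r j⟩, congrArg r (add_comm i j)⟩
    | Sum.inr (Sum.inl (⟨i, hi⟩, j)) =>
        ⟨⟨r i, sr j⟩, congrArg sr (by linear_combination -hi)⟩
    | Sum.inr (Sum.inr (Sum.inl (⟨j, hj⟩, i))) =>
        ⟨⟨sr i, r j⟩, congrArg sr (by linear_combination hj)⟩
    | Sum.inr (Sum.inr (Sum.inr (⟨d, hd⟩, j))) =>
        ⟨⟨sr (d + j), sr j⟩, congrArg r (by linear_combination -hd)⟩
  left_inv := fun
    | ⟨⟨r _, r _⟩, _⟩ => rfl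
    | ⟨⟨r _, sr _⟩, _⟩ => rfl
    | ⟨⟨sr _, r _⟩, _⟩ => rfl
    | ⟨⟨sr i, sr j⟩, h⟩ => Subtype.ext (by simp)
  right_inv := fun
    | Sum.inl (_, _) => rfl
    | Sum.inr (Sum.inl (⟨_, _⟩, _)) => rfl
    | Sum.inr (Sum.inr (Sum.inl (⟨_, _⟩, _))) => rfl
    | Sum.inr (Sum.inr (Sum.inr (⟨d, hd⟩, j))) => by simp


/-- The commuting graph of `D_{2·2m}` (m ≥ 2) has exactly `m(2m-1) + 5m` edges. -/
theorem stmt17 (m : ℕ) (hm : 2 ≤ m) :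
    Nat.card (commutingGraph (DihedralGroup (2 * m))).edgeSet = m * (2 * m - 1) + 5 * m := by
  haveI : NeZero (2 * m) := ⟨by omega⟩
  haveI hdec : DecidableRel (commutingGraph (DihedralGroup (2 * m))).Adj :=
    fun x y => inferInstanceAs (Decidable (x ≠ y ∧ x * y = y * x))
  haveI hdp : DecidablePred
      (fun p : DihedralGroup (2 * m) × DihedralGroup (2 * m) => Commute p.1 p.2) :=
    fun p => inferInstanceAs (Decidable (p.1 * p.2 = p.2 * p.1))
  have hcomm : Fintype.card
      { p : DihedralGroup (2 * m) × DihedralGroup (2 * m) // Commute p.1 p.2 }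
      = 4 * (m * m) + 12 * m := by
    rw [← Nat.card_eq_fintype_card, Nat.card_congr (dgEvenCommuteEquiv m)]
    simp only [Nat.card_sum, Nat.card_prod, Nat.card_zmod,
      dg_card_two_torsion m (by omega)]
    ring
  have hsplit := Finset.card_filter_add_card_filter_not
    (s := Finset.univ.filter
      (fun p : DihedralGroup (2 * m) × DihedralGroup (2 * m) => Commute p.1 p.2))
    (p := fun p => p.1 = p.2)
  have hdiag : (((Finset.univ.filter
      (fun p : DihedralGroup (2 * m) × DihedralGroup (2 * m) => Commute p.1 p.2)).filter
      fun p => p.1 = p.2)).card = 2 * (2 * m) := by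
    have hset : (((Finset.univ.filter
        (fun p : DihedralGroup (2 * m) × DihedralGroup (2 * m) => Commute p.1 p.2)).filter
        fun p => p.1 = p.2)) = Finset.univ.diag := by
      ext ⟨x, y⟩
      constructor
      · intro h
        have h2 : x = y := (Finset.mem_filter.mp h).2
        cases h2
        exact Finset.mem_diag.mpr ⟨Finset.mem_univ x, rfl⟩
      · intro h
        have h2 : x = y := (Finset.mem_diag.mp h).2
        cases h2
        exact Finset.mem_filter.mpr
          ⟨Finset.mem_filter.mpr ⟨Finset.mem_univ _, Commute.refl x⟩, rfl⟩
    rw [hset, Finset.diag_card, Finset.card_univ, DihedralGroup.card]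
  have hadj : (((Finset.univ.filter
      (fun p : DihedralGroup (2 * m) × DihedralGroup (2 * m) => Commute p.1 p.2)).filter
      fun p => ¬p.1 = p.2)).card
      = (Finset.univ.filter
        (fun p : DihedralGroup (2 * m) × DihedralGroup (2 * m) =>
          (commutingGraph (DihedralGroup (2 * m))).Adj p.1 p.2)).card := by
    congr 1
    ext ⟨x, y⟩
    simp only [Finset.filter_filter, Finset.mem_filter, Finset.mem_univ, true_and]
    exact ⟨fun h => ⟨h.2, h.1⟩, fun h => ⟨h.2, h.1⟩⟩
  have hscard : (Finset.univ.filter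
      (fun p : DihedralGroup (2 * m) × DihedralGroup (2 * m) => Commute p.1 p.2)).card
      = Fintype.card
      { p : DihedralGroup (2 * m) × DihedralGroup (2 * m) // Commute p.1 p.2 } :=
    (Fintype.card_subtype _).symm
  have h2 := (commutingGraph (DihedralGroup (2 * m))).two_mul_card_edgeFinset
  have hfin : (Finset.univ.filter fun (x, y) =>
      (commutingGraph (DihedralGroup (2 * m))).Adj x y).card
      = (Finset.univ.filter
        (fun p : DihedralGroup (2 * m) × DihedralGroup (2 * m) =>
          (commutingGraph (DihedralGroup (2 * m))).Adj p.1 p.2)).card := rfl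
  rw [hfin] at h2
  have hE : Nat.card (commutingGraph (DihedralGroup (2 * m))).edgeSet
      = (commutingGraph (DihedralGroup (2 * m))).edgeFinset.card := by
    rw [Nat.card_eq_fintype_card, SimpleGraph.edgeFinset_card]
  have hmm : m ≤ m * m := Nat.le_mul_of_pos_left m (by omega)
  have h2m : m * (2 * m - 1) + m = 2 * (m * m) := by
    have h3 : m * (2 * m - 1) + m * 1 = m * (2 * m - 1 + 1) := (Nat.mul_add m _ _).symm
    rw [mul_one] at h3
    rw [h3, show 2 * m - 1 + 1 = 2 * m by omega]
    ring
  omega
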